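/- Let d be a positive integer divisible by 4, let ζ = exp(2πi/d) ∈ ℂ, and let n be an integer coprime to d. Then ζ^n − ζ^{−n} = ζ − ζ⁻¹ if and only if n ≡ 1 (mod d) or n ≡ −1 + d/2 (mod d). -/

import Mathlib

/-- `zetaC d` is the primitive `d`-th root of unity `exp(2πi/d)` in `ℂ`. -/
noncomputable def zetaC (d : ℕ) : ℂ := Complex.exp (2 * Real.pi * Complex.I / d)

lemma exp_mul_I_sub (x : ℝ) :
    Complex.exp (x * Complex.I) - Complex.exp ((-x : ℝ) * Complex.I)
      = 2 * Complex.I * Complex.sin x := by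
  rw [Complex.sin]
  push_cast
  have h := Complex.I_sq
  ring_nf
  rw [Complex.I_sq]
  ring

lemma zetaC_zpow (d : ℕ) (hd : 0 < d) (m : ℤ) :
    zetaC d ^ m = Complex.exp (((2 * Real.pi * m / d : ℝ) : ℂ) * Complex.I) := by
  rw [zetaC, ← Complex.exp_int_mul]
  congr 1
  have hd0 : (d : ℂ) ≠ 0 := Nat.cast_ne_zero.mpr hd.ne'
  push_cast
  field_simp

/-- For `4 ∣ d`, `d > 0`, and `n` coprime to `d`, one has
`ζ^n - ζ^{-n} = ζ - ζ⁻¹` iff `n ≡ 1 (mod d)` or `n ≡ -1 + d/2 (mod d)`. -/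
theorem stmt2 (d : ℕ) (hd : 0 < d) (h4 : 4 ∣ d) (n : ℤ) (hn : IsCoprime n (d : ℤ)) :
    zetaC d ^ n - zetaC d ^ (-n) = zetaC d - (zetaC d)⁻¹ ↔
      (n ≡ 1 [ZMOD (d : ℤ)] ∨ n ≡ -1 + (d : ℤ) / 2 [ZMOD (d : ℤ)]) := by
  obtain ⟨q, rfl⟩ := h4
  set d := 4 * q with hdef
  have hq : 0 < q := by omega
  have hdR : (d : ℝ) ≠ 0 := Nat.cast_ne_zero.mpr hd.ne'
  have hπ : Real.pi ≠ 0 := Real.pi_ne_zero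
  set x : ℝ := 2 * Real.pi * n / d with hx
  set y : ℝ := 2 * Real.pi / d with hy
  have hdiv : (d : ℤ) / 2 = 2 * q := by
    push_cast [hdef]; omega
  have key : zetaC d ^ n - zetaC d ^ (-n) = zetaC d - (zetaC d)⁻¹ ↔
      Real.sin x = Real.sin y := by
    have h1 : zetaC d ^ (n : ℤ) = Complex.exp ((x : ℂ) * Complex.I) := zetaC_zpow d hd n
    have h2 : zetaC d ^ (-n : ℤ) = Complex.exp (((-x : ℝ) : ℂ) * Complex.I) := by
      rw [zetaC_zpow d hd (-n)]
      norm_num [hx]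
      ring_nf
    have h3 : zetaC d = Complex.exp ((y : ℂ) * Complex.I) := by
      have := zetaC_zpow d hd 1
      simpa [hy] using this
    have h4' : (zetaC d)⁻¹ = Complex.exp (((-y : ℝ) : ℂ) * Complex.I) := by
      rw [← zpow_neg_one, zetaC_zpow d hd (-1)]
      norm_num [hy]
      ring_nf
    rw [h1, h2, h4', h3, exp_mul_I_sub, exp_mul_I_sub]
    constructor
    · intro h
      have := mul_left_cancel₀ (by simp [Complex.I_ne_zero] : (2 * Complex.I : ℂ) ≠ 0) h
      exact_mod_cast this
    · intro h
      congr 1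
      exact_mod_cast h
  have h2π : (2 * Real.pi : ℝ) ≠ 0 := by positivity
  have hd2 : (d : ℝ) = 4 * q := by push_cast [hdef]; ring
  rw [key, Real.sin_eq_sin_iff]
  constructor
  · rintro ⟨k, h | h⟩
    · left
      rw [hy, hx] at h
      field_simp at h
      have e2 : (1 : ℝ) = k * d + n := by
        refine mul_left_cancel₀ h2π ?_
        linear_combination 2 * Real.pi * h
      have e3 : (1 : ℤ) = k * d + n := by exact_mod_cast e2
      exact Int.ModEq.symm (Int.modEq_iff_dvd.mpr ⟨-k, by linear_combination -e3⟩)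
    · right
      rw [hy, hx] at h
      field_simp at h
      have e2 : (1 : ℝ) = (2 * k + 1) * (2 * q) - n := by
        refine mul_left_cancel₀ h2π ?_
        linear_combination Real.pi * h + (2 * k + 1) * Real.pi * hd2
      have e3 : (1 : ℤ) = (2 * k + 1) * (2 * q) - n := by exact_mod_cast e2
      rw [hdiv]
      refine Int.ModEq.symm (Int.modEq_iff_dvd.mpr ⟨k, ?_⟩)
      have hdz : (d : ℤ) = 2 * (2 * q) := by push_cast [hdef]; ring
      rw [hdz]
      linear_combination e3
  · rintro (h | h)
    · obtain ⟨k, hk⟩ := Int.modEq_iff_dvd.mp h.symm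
      have hk' : (n : ℝ) - 1 = d * k := by exact_mod_cast hk
      refine ⟨-k, Or.inl ?_⟩
      rw [hy, hx]
      field_simp
      push_cast
      linear_combination -hk'
    · obtain ⟨k, hk⟩ := Int.modEq_iff_dvd.mp h.symm
      rw [hdiv] at hk
      have hk' : (n : ℝ) - (-1 + 2 * q) = d * k := by exact_mod_cast hk
      refine ⟨k, Or.inr ?_⟩
      rw [hy, hx]
      field_simp
      linear_combination 2 * hk' - hd2
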